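/- Let φ : 𝒜 → ℬ be a bijection between standard operator algebras on complex Banach spaces satisfying φ(ABA) = φ(A)φ(B)φ(A). Then for every n ∈ ℕ and every tripotent P ∈ 𝒜, rank P = n if and only if rank φ(P) = n. -/

import Mathlib

set_option synthInstance.maxHeartbeats 1000000
set_option maxHeartbeats 1000000

/-- A standard operator algebra on a complex Banach space: a subalgebra of the
bounded operators containing all finite-rank operators. -/
def IsStandardOpAlg {X : Type*} [NormedAddCommGroup X] [NormedSpace ℂ X]
    (S : Subalgebra ℂ (X →L[ℂ] X)) : Prop :=
  ∀ T : X →L[ℂ] X, FiniteDimensional ℂ (LinearMap.range (T : X →ₗ[ℂ] X)) → T ∈ S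

section aux
variable {X : Type*} [NormedAddCommGroup X] [NormedSpace ℂ X]

noncomputable def rkOp (T : X →L[ℂ] X) : Cardinal :=
  Module.rank ℂ (LinearMap.range (T : X →ₗ[ℂ] X))

lemma range_mul_le (w B : X →L[ℂ] X) :
    LinearMap.range ((w * B : X →L[ℂ] X) : X →ₗ[ℂ] X) ≤ LinearMap.range (w : X →ₗ[ℂ] X) := by
  rintro y ⟨x, rfl⟩
  exact ⟨B x, rfl⟩

lemma rk_mul_le (w A : X →L[ℂ] X) : rkOp (w * A * w) ≤ rkOp w := by
  apply Submodule.rank_mono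
  rw [mul_assoc]
  exact range_mul_le w (A * w)

lemma key_swap (u w A : X →L[ℂ] X) (hu : u * u * u = u) (hw : w * w * w = w)
    (hA : u = w * A * w) (hfin : rkOp w < Cardinal.aleph0) (heq : rkOp u = rkOp w) :
    u * (u * w * u) * u = w := by
  -- pointwise versions of tripotency
  have hu3 : ∀ x, u (u (u x)) = u x := fun x => by
    have := DFunLike.congr_fun hu x; simpa [ContinuousLinearMap.mul_apply] using this
  have hw3 : ∀ x, w (w (w x)) = w x := fun x => by
    have := DFunLike.congr_fun hw x; simpa [ContinuousLinearMap.mul_apply] using this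
  have hAx : ∀ x, u x = w (A (w x)) := fun x => by
    have := DFunLike.congr_fun hA x; simpa [ContinuousLinearMap.mul_apply] using this
  -- u ∘ E = u and E ∘ u = u  where E = w ∘ w
  have huE : ∀ x, u (w (w x)) = u x := fun x => by
    rw [hAx x, hAx (w (w x)), hw3 x]
  have hEu : ∀ x, w (w (u x)) = u x := fun x => by
    rw [hAx x, hw3 (A (w x))]
  -- ranges
  set Rw := LinearMap.range (w : X →ₗ[ℂ] X) with hRw
  set RE := LinearMap.range ((w * w : X →L[ℂ] X) : X →ₗ[ℂ] X) with hRE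
  set Ru := LinearMap.range (u : X →ₗ[ℂ] X) with hRu
  have hREw : RE = Rw := by
    apply le_antisymm
    · rintro y ⟨x, rfl⟩; exact ⟨w x, rfl⟩
    · rintro y ⟨x, rfl⟩
      exact ⟨w x, by simpa [ContinuousLinearMap.mul_apply] using hw3 x⟩
  have hRuE : Ru ≤ RE := by
    rintro y ⟨x, rfl⟩
    exact ⟨u x, by simpa [ContinuousLinearMap.mul_apply] using hEu x⟩
  have hfinw : FiniteDimensional ℂ Rw := Module.rank_lt_aleph0_iff.mp hfin
  have hfinE : FiniteDimensional ℂ RE := by rw [hREw]; exact hfinw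
  have hrkE : Module.rank ℂ RE = Module.rank ℂ Ru := by
    rw [hREw]; exact heq.symm
  have hRuE' : Ru = RE := by
    apply Submodule.eq_of_le_of_finrank_le hRuE
    simp [Module.finrank, hrkE]
  -- injectivity of u on RE
  have hmem : ∀ x ∈ RE, (u : X →ₗ[ℂ] X) x ∈ Ru := fun x _ => ⟨x, rfl⟩
  have hfinu : FiniteDimensional ℂ Ru := Submodule.finiteDimensional_of_le hRuE
  set f : RE →ₗ[ℂ] Ru := LinearMap.restrict (u : X →ₗ[ℂ] X) hmem with hf
  have hfsurj : Function.Surjective f := by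
    rintro ⟨y, x, rfl⟩
    refine ⟨⟨w (w x), ⟨x, rfl⟩⟩, ?_⟩
    apply Subtype.ext
    simpa [hf, LinearMap.restrict_apply] using huE x
  have hfinj : Function.Injective f := by
    have hfr : Module.finrank ℂ RE = Module.finrank ℂ Ru := by
      simp [Module.finrank, hrkE]
    exact (LinearMap.injective_iff_surjective_of_finrank_eq_finrank hfr).mpr hfsurj
  have hkeru_le : ∀ x, u x = 0 → w (w x) = 0 := by
    intro x hx
    have h1 : f ⟨w (w x), ⟨x, rfl⟩⟩ = 0 := by
      apply Subtype.ext
      simp only [hf, LinearMap.restrict_apply]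
      simpa [huE x] using hx
    have h2 : f 0 = 0 := map_zero f
    have := hfinj (h1.trans h2.symm)
    exact congrArg Subtype.val this
  -- ker E ⊆ ker w
  have hkerE_le_kerw : ∀ x, w (w x) = 0 → w x = 0 := fun x hx => by
    rw [← hw3 x, hx, map_zero]
  -- ker F = ker u where F = u ∘ u
  have hkerF : ∀ x, u (u x) = 0 → u x = 0 := fun x hx => by
    rw [← hu3 x, hx, map_zero]
  -- range w ⊆ Ru
  have hrw_le : ∀ x, ∃ z, u z = w x := by
    intro x
    have : w x ∈ Ru := by
      rw [hRuE', hREw]; exact ⟨x, rfl⟩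
    exact this
  -- final computation
  ext x
  simp only [ContinuousLinearMap.mul_apply]
  -- goal : u (u (w (u (u x)))) = w x
  have step1 : w (u (u x)) = w x := by
    have hd0 : u (u (u (u x) - x)) = 0 := by
      rw [map_sub, map_sub, hu3 x, sub_self]
    have hd1 : u (u (u x) - x) = 0 := hkerF _ hd0
    have hd2 : w (w (u (u x) - x)) = 0 := hkeru_le _ hd1
    have hd3 : w (u (u x) - x) = 0 := hkerE_le_kerw _ hd2
    have := sub_eq_zero.mp (by simpa [map_sub] using hd3)
    exact this
  rw [step1]
  obtain ⟨z, hz⟩ := hrw_le x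
  rw [← hz, hu3 z, hz]

lemma rkOp_eq_zero_iff (T : X →L[ℂ] X) : rkOp T = 0 ↔ T = 0 := by
  rw [rkOp, Submodule.rank_eq_zero, LinearMap.range_eq_bot]
  constructor
  · intro h; ext x; exact DFunLike.congr_fun h x
  · intro h; ext x; simp [h]

variable (𝒜 : Subalgebra ℂ (X →L[ℂ] X))

/-- The chain predicate: expressible purely in terms of the Jordan-type triple
product, hence preserved by `φ`. -/
def ChainPred (n : ℕ) (P : 𝒜) : Prop :=
  ∃ v : ℕ → 𝒜,
    (∀ i, i < n → v i * v i * v i = v i) ∧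
    (0 < n → v 0 ≠ 0) ∧
    (∀ i, i + 1 < n → (∃ A : 𝒜, v i = v (i+1) * A * v (i+1)) ∧
        ¬ ∃ B : 𝒜, v (i+1) = v i * B * v i) ∧
    (0 < n → ∃ A : 𝒜, v (n-1) = P * A * P)

lemma rank_of_chain {n : ℕ} {P : 𝒜} (hc : ChainPred 𝒜 n P) :
    (n : Cardinal) ≤ rkOp (P : X →L[ℂ] X) := by
  by_contra hlt
  push_neg at hlt
  rcases Nat.eq_zero_or_pos n with hn | hn
  · rw [hn] at hlt; simp at hlt
  obtain ⟨v, htri, hne, hstep, hlast⟩ := hc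
  have hPfin : rkOp (P : X →L[ℂ] X) < Cardinal.aleph0 :=
    hlt.trans (Cardinal.nat_lt_aleph0 n)
  -- every element of the chain has rank at most rkOp P
  have hle : ∀ j, j < n → rkOp ((v (n-1-j) : X →L[ℂ] X)) ≤ rkOp (P : X →L[ℂ] X) := by
    intro j
    induction j with
    | zero =>
      intro _
      obtain ⟨A, hA⟩ := hlast hn
      have : ((v (n-1-0) : X →L[ℂ] X)) = (P : X →L[ℂ] X) * A * P := by
        exact_mod_cast congrArg (Subtype.val) hA
      rw [this]
      exact rk_mul_le _ _
    | succ j ih =>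
      intro hj
      have hj' : j < n := Nat.lt_of_succ_lt hj
      have hidx : n - 1 - (j+1) + 1 = n - 1 - j := by omega
      have hidx2 : (n - 1 - (j+1)) + 1 < n := by omega
      obtain ⟨A, hA⟩ := (hstep _ hidx2).1
      have : ((v (n-1-(j+1)) : X →L[ℂ] X)) =
          (v (n-1-(j+1)+1) : X →L[ℂ] X) * A * (v (n-1-(j+1)+1) : X →L[ℂ] X) := by
        exact_mod_cast congrArg (Subtype.val) hA
      rw [hidx] at this
      calc rkOp ((v (n-1-(j+1)) : X →L[ℂ] X)) ≤ rkOp ((v (n-1-j) : X →L[ℂ] X)) := by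
            rw [this]; exact rk_mul_le _ _
        _ ≤ _ := ih hj'
  have hle' : ∀ i, i < n → rkOp ((v i : X →L[ℂ] X)) ≤ rkOp (P : X →L[ℂ] X) := by
    intro i hi
    have : i = n - 1 - (n - 1 - i) := by omega
    rw [this]
    exact hle _ (by omega)
  -- main claim: rank of v i is at least i+1
  have claim : ∀ i, i < n → ((i+1 : ℕ) : Cardinal) ≤ rkOp ((v i : X →L[ℂ] X)) := by
    intro i
    induction i with
    | zero =>
      intro h0
      have hv0 : (v 0 : X →L[ℂ] X) ≠ 0 := by
        intro h; apply hne hn; ext1; exact_mod_cast h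
      have : rkOp ((v 0 : X →L[ℂ] X)) ≠ 0 := fun h => hv0 ((rkOp_eq_zero_iff _).mp h)
      simpa using Cardinal.one_le_iff_ne_zero.mpr this
    | succ i ih =>
      intro hi
      have hi' : i < n := Nat.lt_of_succ_lt hi
      have h1 : ((i+1 : ℕ) : Cardinal) ≤ rkOp ((v i : X →L[ℂ] X)) := ih hi'
      obtain ⟨A, hA⟩ := (hstep i hi).1
      have hAop : ((v i : X →L[ℂ] X)) =
          (v (i+1) : X →L[ℂ] X) * A * (v (i+1) : X →L[ℂ] X) := by
        exact_mod_cast congrArg (Subtype.val) hA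
      have hle2 : rkOp ((v i : X →L[ℂ] X)) ≤ rkOp ((v (i+1) : X →L[ℂ] X)) := by
        rw [hAop]; exact rk_mul_le _ _
      have hne2 : rkOp ((v i : X →L[ℂ] X)) ≠ rkOp ((v (i+1) : X →L[ℂ] X)) := by
        intro heq
        apply (hstep i hi).2
        refine ⟨v i * v (i+1) * v i, ?_⟩
        have htri1 : (v i : X →L[ℂ] X) * (v i : X →L[ℂ] X) * (v i : X →L[ℂ] X)
            = (v i : X →L[ℂ] X) := by exact_mod_cast congrArg Subtype.val (htri i hi')
        have htri2 : (v (i+1) : X →L[ℂ] X) * (v (i+1) : X →L[ℂ] X) * (v (i+1) : X →L[ℂ] X)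
            = (v (i+1) : X →L[ℂ] X) := by exact_mod_cast congrArg Subtype.val (htri (i+1) hi)
        have hfin2 : rkOp ((v (i+1) : X →L[ℂ] X)) < Cardinal.aleph0 :=
          lt_of_le_of_lt (hle' (i+1) hi) hPfin
        have := key_swap ((v i : X →L[ℂ] X)) ((v (i+1) : X →L[ℂ] X)) A htri1 htri2 hAop hfin2 heq
        ext1
        push_cast
        exact this.symm
      have hlt2 : rkOp ((v i : X →L[ℂ] X)) < rkOp ((v (i+1) : X →L[ℂ] X)) :=
        lt_of_le_of_ne hle2 hne2
      -- convert to natural numbers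
      have hfin2 : rkOp ((v (i+1) : X →L[ℂ] X)) < Cardinal.aleph0 :=
        lt_of_le_of_lt (hle' (i+1) hi) hPfin
      obtain ⟨m, hm⟩ := Cardinal.lt_aleph0.mp hfin2
      rw [hm] at hlt2 ⊢
      have : (i+1 : ℕ) < m := by exact_mod_cast lt_of_le_of_lt h1 hlt2
      exact_mod_cast this
  have := claim (n-1) (by omega)
  have hfinal : ((n : ℕ) : Cardinal) ≤ rkOp (P : X →L[ℂ] X) := by
    have h2 : (n - 1 + 1 : ℕ) = n := by omega
    rw [h2] at this
    exact this.trans (hle' (n-1) (by omega))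
  exact absurd hfinal (not_le.mpr hlt)

lemma exists_dual_family {n : ℕ} (y : Fin n → X) (hy : LinearIndependent ℂ y) :
    ∃ g : Fin n → (X →L[ℂ] ℂ), ∀ i j, g i (y j) = if i = j then 1 else 0 := by
  set S : Submodule ℂ X := Submodule.span ℂ (Set.range y) with hS
  haveI : FiniteDimensional ℂ S := FiniteDimensional.span_of_finite ℂ (Set.finite_range y)
  let b : Module.Basis (Fin n) ℂ S := Module.Basis.span hy
  have hcont : ∀ i : Fin n, ∃ g : X →L[ℂ] ℂ, ∀ s : S, g s = b.coord i s := by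
    intro i
    obtain ⟨g, hg, -⟩ := exists_extension_norm_eq S (LinearMap.toContinuousLinearMap (b.coord i))
    exact ⟨g, fun s => by simpa using hg s⟩
  choose g hg using hcont
  refine ⟨g, fun i j => ?_⟩
  have hyj : y j ∈ S := Submodule.subset_span ⟨j, rfl⟩
  have hbj : (⟨y j, hyj⟩ : S) = b j := by
    apply Subtype.ext
    exact congrArg Subtype.val (Module.Basis.span_apply hy j).symm
  have : g i (y j) = b.coord i (⟨y j, hyj⟩ : S) := hg i ⟨y j, hyj⟩
  rw [this, hbj, Module.Basis.coord_apply, Module.Basis.repr_self, Finsupp.single_apply]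
  simp [eq_comm]

lemma chain_of_rank (h𝒜 : IsStandardOpAlg 𝒜) {P : 𝒜} (hP : P * P * P = P) {n : ℕ}
    (hn : (n : Cardinal) ≤ rkOp (P : X →L[ℂ] X)) : ChainPred 𝒜 n P := by
  rcases Nat.eq_zero_or_pos n with h0 | hnpos
  · subst h0
    exact ⟨fun _ => 0, fun i hi => absurd hi (by omega), fun h => absurd h (by omega),
      fun i hi => absurd hi (by omega), fun h => absurd h (by omega)⟩
  set T : X →L[ℂ] X := (P : X →L[ℂ] X) with hTdef
  have hT3 : ∀ x, T (T (T x)) = T x := by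
    intro x
    have h' : T * T * T = T := by rw [hTdef]; exact_mod_cast congrArg Subtype.val hP
    simpa [ContinuousLinearMap.mul_apply] using DFunLike.congr_fun h' x
  -- a linearly independent family of size n inside the range of T
  set R : Submodule ℂ X := LinearMap.range (T : X →ₗ[ℂ] X) with hRdef
  obtain ⟨emb⟩ : Nonempty (Fin n ↪ Module.Basis.ofVectorSpaceIndex ℂ R) := by
    apply Cardinal.lift_mk_le'.mp
    rw [Cardinal.mk_fin, Cardinal.lift_natCast, Cardinal.lift_uzero,
      (Module.Basis.ofVectorSpace ℂ R).mk_eq_rank'']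
    exact hn
  set y0 : Fin n → R := fun k => Module.Basis.ofVectorSpace ℂ R (emb k) with hy0
  have hy0li : LinearIndependent ℂ y0 :=
    (Module.Basis.ofVectorSpace ℂ R).linearIndependent.comp emb emb.injective
  set y : Fin n → X := fun k => (y0 k : X) with hy
  have hyli : LinearIndependent ℂ y :=
    hy0li.map' (Submodule.subtype R) (Submodule.ker_subtype R)
  have hEy : ∀ k, T (T (y k)) = y k := by
    intro k
    obtain ⟨x, hx⟩ := (y0 k).2
    have hx' : T x = y k := hx
    rw [← hx', hT3]
  obtain ⟨g, hgd⟩ := exists_dual_family y hyli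
  set idx : ℕ → Finset (Fin n) := fun i => Finset.univ.filter (fun j : Fin n => (j : ℕ) ≤ i)
    with hidx
  have hmemidx : ∀ (i : ℕ) (j : Fin n), j ∈ idx i ↔ (j : ℕ) ≤ i := by
    intro i j; simp [hidx]
  set vop : ℕ → (X →L[ℂ] X) :=
    fun i => ∑ j ∈ idx i, ((g j).comp (T * T)).smulRight (y j) with hvop
  have happ : ∀ i x, vop i x = ∑ j ∈ idx i, g j (T (T x)) • y j := by
    intro i x
    simp [hvop, ContinuousLinearMap.sum_apply, ContinuousLinearMap.smulRight_apply,
      ContinuousLinearMap.coe_comp', ContinuousLinearMap.mul_apply]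
  have hgy : ∀ j k, g j (T (T (y k))) = if j = k then 1 else 0 := by
    intro j k; rw [hEy k]; exact hgd j k
  have hvyk : ∀ (i : ℕ) (k : Fin n), (k : ℕ) ≤ i → vop i (y k) = y k := by
    intro i k hk
    rw [happ]
    rw [Finset.sum_eq_single_of_mem k ((hmemidx i k).mpr hk)]
    · rw [hgy]; simp
    · intro j _ hjk
      rw [hgy, if_neg hjk, zero_smul]
  have hTTv : ∀ i x, T (T (vop i x)) = vop i x := by
    intro i x
    rw [happ i x, map_sum, map_sum]
    exact Finset.sum_congr rfl fun j _ => by rw [map_smul, map_smul, hEy]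
  have hvTT : ∀ i x, vop i (T (T x)) = vop i x := by
    intro i x
    rw [happ i (T (T x)), happ i x]
    exact Finset.sum_congr rfl fun j _ => by rw [hT3 (T x)]
  have hgv : ∀ (j : Fin n) (i : ℕ) x, g j (vop i x) = if (j : ℕ) ≤ i then g j (T (T x)) else 0 := by
    intro j i x
    rw [happ i x, map_sum]
    have : ∀ k ∈ idx i, g j (g k (T (T x)) • y k)
        = if j = k then g k (T (T x)) else 0 := by
      intro k _
      rw [map_smul, hgd j k]
      simp [smul_eq_mul, mul_ite]
    rw [Finset.sum_congr rfl this, Finset.sum_ite_eq]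
    simp [hmemidx]
  have hvv : ∀ (i i' : ℕ) x, i ≤ i' → vop i (vop i' x) = vop i x := by
    intro i i' x h
    rw [happ i (vop i' x), happ i x]
    refine Finset.sum_congr rfl fun j hj => ?_
    have hji : (j : ℕ) ≤ i := (hmemidx i j).mp hj
    rw [hTTv, hgv, if_pos (hji.trans h)]
  have hvv' : ∀ (i i' : ℕ) x, i ≤ i' → vop i' (vop i x) = vop i x := by
    intro i i' x h
    have hterm : ∀ j ∈ idx i', g j (T (T (vop i x))) • y j
        = if (j : ℕ) ≤ i then g j (T (T x)) • y j else 0 := by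
      intro j _
      rw [hTTv, hgv]
      split <;> simp
    rw [happ i' (vop i x), Finset.sum_congr rfl hterm, ← Finset.sum_filter, happ i x]
    apply Finset.sum_congr
    · ext j
      simp only [hidx, Finset.mem_filter, Finset.mem_univ, true_and]
      omega
    · intros; rfl
  -- membership in the algebra
  have hrange_le : ∀ i, LinearMap.range ((vop i : X →L[ℂ] X) : X →ₗ[ℂ] X)
      ≤ Submodule.span ℂ (y '' {j : Fin n | (j : ℕ) ≤ i}) := by
    intro i
    rintro z ⟨x, rfl⟩
    have : (vop i : X →ₗ[ℂ] X) x = vop i x := rfl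
    rw [this, happ]
    apply Submodule.sum_mem
    intro j hj
    exact Submodule.smul_mem _ _ (Submodule.subset_span ⟨j, (hmemidx i j).mp hj, rfl⟩)
  have hvmem : ∀ i, vop i ∈ 𝒜 := by
    intro i
    apply h𝒜
    have : FiniteDimensional ℂ (Submodule.span ℂ (y '' {j : Fin n | (j : ℕ) ≤ i})) :=
      FiniteDimensional.span_of_finite ℂ ((Set.toFinite _).image y)
    exact Submodule.finiteDimensional_of_le (hrange_le i)
  -- rank bounds
  have hub : ∀ i : ℕ, rkOp (vop i) ≤ ((i+1 : ℕ) : Cardinal) := by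
    intro i
    set s : Set (Fin n) := {j : Fin n | (j : ℕ) ≤ i} with hs
    set f : s → X := fun j => y j.1 with hfdef
    have himg : y '' s = Set.range f := Set.image_eq_range y s
    have h1 : rkOp (vop i) ≤ Module.rank ℂ (Submodule.span ℂ (Set.range f)) := by
      rw [← himg]
      exact Submodule.rank_mono (hrange_le i)
    have h2 : Module.rank ℂ (Submodule.span ℂ (Set.range f)) ≤ Cardinal.mk (Set.range f) :=
      rank_span_le _
    have h3 : Cardinal.mk (Set.range f) ≤ ((i+1 : ℕ) : Cardinal) := by
      have ha : Cardinal.lift.{0} (Cardinal.mk (Set.range f))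
          ≤ Cardinal.lift.{_} (Cardinal.mk s) := Cardinal.mk_range_le_lift
      have hb : Cardinal.mk s ≤ ((i+1 : ℕ) : Cardinal.{0}) := by
        rw [← Cardinal.mk_fin (i+1)]
        refine Cardinal.mk_le_of_injective (f := fun j => (⟨(j.1 : ℕ), by
          have := j.2; simp only [hs, Set.mem_setOf_eq] at this; omega⟩ : Fin (i+1))) ?_
        intro a b hab
        apply Subtype.ext
        apply Fin.ext
        simpa using congrArg Fin.val hab
      rw [Cardinal.lift_uzero] at ha
      calc Cardinal.mk (Set.range f) ≤ Cardinal.lift.{_} (Cardinal.mk s) := ha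
        _ ≤ Cardinal.lift.{_} ((i+1 : ℕ) : Cardinal.{0}) := Cardinal.lift_le.mpr hb
        _ = ((i+1 : ℕ) : Cardinal) := by simp
    exact h1.trans (h2.trans h3)
  have hlb : ∀ i : ℕ, i < n → ((i+1 : ℕ) : Cardinal) ≤ rkOp (vop i) := by
    intro i hi
    set s : Set (Fin n) := {j : Fin n | (j : ℕ) ≤ i} with hs
    set f : s → X := fun j => y j.1 with hfdef
    have hfli : LinearIndependent ℂ f := hyli.comp Subtype.val Subtype.val_injective
    have hfinj : Function.Injective f := fun a b hab => Subtype.ext (hyli.injective hab)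
    have hspan_le : Submodule.span ℂ (Set.range f)
        ≤ LinearMap.range ((vop i : X →L[ℂ] X) : X →ₗ[ℂ] X) := by
      rw [Submodule.span_le]
      rintro z ⟨⟨j, hj⟩, rfl⟩
      have hj' : (j : ℕ) ≤ i := hj
      exact ⟨y j, hvyk i j hj'⟩
    have h1 : Module.rank ℂ (Submodule.span ℂ (Set.range f)) = Cardinal.mk (Set.range f) :=
      rank_span hfli
    have h2 : Cardinal.mk (Set.range f) = ((i+1 : ℕ) : Cardinal) := by
      have ha := Cardinal.mk_range_eq_of_injective hfinj
      rw [Cardinal.lift_uzero] at ha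
      have hb : Cardinal.mk s = ((i+1 : ℕ) : Cardinal.{0}) := by
        rw [← Cardinal.mk_fin (i+1)]
        apply Cardinal.mk_congr
        refine ⟨fun j => ⟨(j.1 : ℕ), by
            have := j.2; simp only [hs, Set.mem_setOf_eq] at this; omega⟩,
          fun k => ⟨⟨(k : ℕ), by omega⟩, by simp [hs]; omega⟩, ?_, ?_⟩
        · intro j; apply Subtype.ext; apply Fin.ext; simp
        · intro k; apply Fin.ext; simp
      rw [ha, hb]
      simp
    rw [← h2, ← h1]
    exact Submodule.rank_mono hspan_le
  -- assemble the chain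
  refine ⟨fun i => ⟨vop i, hvmem i⟩, ?_, ?_, ?_, ?_⟩
  · intro i _
    apply Subtype.ext
    show vop i * vop i * vop i = vop i
    ext x
    simp only [ContinuousLinearMap.mul_apply]
    rw [hvv i i (vop i x) le_rfl, hvv i i x le_rfl]
  · intro _ hc
    have h0 : vop 0 = 0 := congrArg Subtype.val hc
    have := hvyk 0 ⟨0, hnpos⟩ (by simp)
    rw [h0] at this
    exact hyli.ne_zero ⟨0, hnpos⟩ (by simpa using this.symm)
  · intro i hi
    constructor
    · refine ⟨⟨vop i, hvmem i⟩, ?_⟩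
      apply Subtype.ext
      show vop i = vop (i+1) * vop i * vop (i+1)
      ext x
      simp only [ContinuousLinearMap.mul_apply]
      rw [hvv i (i+1) x (by omega), hvv' i (i+1) x (by omega)]
    · rintro ⟨B, hB⟩
      have hBop : vop (i+1) = vop i * (B : X →L[ℂ] X) * vop i := by
        have := congrArg Subtype.val hB
        simp only [MulMemClass.coe_mul] at this
        exact this
      have h1 : rkOp (vop (i+1)) ≤ rkOp (vop i) := by
        rw [hBop]; exact rk_mul_le _ _
      have h2 := (hlb (i+1) hi).trans (h1.trans (hub i))
      have : ((i+1+1 : ℕ) : Cardinal) ≤ ((i+1 : ℕ) : Cardinal) := h2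
      rw [Nat.cast_le] at this
      omega
  · intro _
    refine ⟨P * ⟨vop (n-1), hvmem (n-1)⟩ * P, ?_⟩
    apply Subtype.ext
    show vop (n-1) = (P : X →L[ℂ] X) * ((P : X →L[ℂ] X) * vop (n-1) * (P : X →L[ℂ] X)) * (P : X →L[ℂ] X)
    ext x
    simp only [ContinuousLinearMap.mul_apply]
    rw [← hTdef]
    rw [hvTT (n-1) x, hTTv (n-1) x]

lemma rank_eq_iff_chains (h𝒜 : IsStandardOpAlg 𝒜) {P : 𝒜} (hP : P * P * P = P) (n : ℕ) :
    rkOp (P : X →L[ℂ] X) = n ↔ ChainPred 𝒜 n P ∧ ¬ ChainPred 𝒜 (n+1) P := by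
  constructor
  · intro h
    refine ⟨chain_of_rank 𝒜 h𝒜 hP (le_of_eq h.symm), fun hc => ?_⟩
    have hge := rank_of_chain 𝒜 hc
    rw [h, Nat.cast_le] at hge
    omega
  · rintro ⟨h1, h2⟩
    have hge := rank_of_chain 𝒜 h1
    have hlt : rkOp (P : X →L[ℂ] X) < ((n+1 : ℕ) : Cardinal) :=
      lt_of_not_ge (fun hle => h2 (chain_of_rank 𝒜 h𝒜 hP hle))
    obtain ⟨m, hm⟩ := Cardinal.lt_aleph0.mp (hlt.trans (Cardinal.nat_lt_aleph0 _))
    rw [hm] at hge hlt ⊢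
    rw [Nat.cast_le] at hge
    rw [Nat.cast_lt] at hlt
    have : m = n := by omega
    rw [this]

end aux

section transfer
variable {X Y : Type*} [NormedAddCommGroup X] [NormedSpace ℂ X]
  [NormedAddCommGroup Y] [NormedSpace ℂ Y]

lemma chain_map (𝒜 : Subalgebra ℂ (X →L[ℂ] X)) (ℬ : Subalgebra ℂ (Y →L[ℂ] Y))
    (φ : 𝒜 → ℬ) (hinj : Function.Injective φ) (hsurj : Function.Surjective φ)
    (hmul : ∀ A B : 𝒜, φ (A * B * A) = φ A * φ B * φ A) (n : ℕ) (P : 𝒜) :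
    ChainPred 𝒜 n P → ChainPred ℬ n (φ P) := by
  have hzero : φ 0 = 0 := by
    obtain ⟨Z, hZ⟩ := hsurj 0
    have := hmul 0 Z
    rw [hZ] at this
    simpa using this
  rintro ⟨v, h1, h2, h3, h4⟩
  refine ⟨fun i => φ (v i), ?_, ?_, ?_, ?_⟩
  · intro i hi
    rw [← hmul, h1 i hi]
  · intro hn hc
    exact (h2 hn) (hinj (by simp only at hc; rw [hc, hzero]))
  · intro i hi
    obtain ⟨⟨A, hA⟩, hB⟩ := (h3 i hi)
    constructor
    · exact ⟨φ A, by rw [← hmul, ← hA]⟩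
    · rintro ⟨C, hC⟩
      obtain ⟨B, rfl⟩ := hsurj C
      exact hB ⟨B, hinj (by rw [hmul]; exact hC)⟩
  · intro hn
    obtain ⟨A, hA⟩ := h4 hn
    exact ⟨φ A, by rw [← hmul, ← hA]⟩

end transfer


theorem stmt4 {X Y : Type*} [NormedAddCommGroup X] [NormedSpace ℂ X] [CompleteSpace X]
    [NormedAddCommGroup Y] [NormedSpace ℂ Y] [CompleteSpace Y]
    (𝒜 : Subalgebra ℂ (X →L[ℂ] X)) (ℬ : Subalgebra ℂ (Y →L[ℂ] Y))
    (h𝒜 : IsStandardOpAlg 𝒜) (hℬ : IsStandardOpAlg ℬ)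
    (φ : 𝒜 → ℬ) (hbij : Function.Bijective φ)
    (hmul : ∀ A B : 𝒜, φ (A * B * A) = φ A * φ B * φ A) :
    ∀ (n : ℕ) (P : 𝒜), P ^ 3 = P →
      (Module.rank ℂ (LinearMap.range ((P : X →L[ℂ] X) : X →ₗ[ℂ] X)) = n ↔
       Module.rank ℂ (LinearMap.range ((φ P : Y →L[ℂ] Y) : Y →ₗ[ℂ] Y)) = n) := by
  intro n P hP
  have hPm : P * P * P = P := by rw [← pow_two, ← pow_succ]; exact hP
  set e := Equiv.ofBijective φ hbij with he
  set ψ := ⇑e.symm with hψ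
  have happ : ∀ C : ℬ, φ (ψ C) = C := fun C => e.apply_symm_apply C
  have hψmul : ∀ A B : ℬ, ψ (A * B * A) = ψ A * ψ B * ψ A := by
    intro A B
    apply hbij.1
    calc φ (ψ (A * B * A)) = A * B * A := happ _
      _ = φ (ψ A) * φ (ψ B) * φ (ψ A) := by rw [happ, happ]
      _ = φ (ψ A * ψ B * ψ A) := (hmul _ _).symm
  have hψP : ψ (φ P) = P := e.symm_apply_apply P
  have hφP : φ P * φ P * φ P = φ P := by rw [← hmul, hPm]
  change (rkOp ((P : X →L[ℂ] X)) = (n : Cardinal)) ↔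
    (rkOp ((φ P : Y →L[ℂ] Y)) = (n : Cardinal))
  rw [rank_eq_iff_chains 𝒜 h𝒜 hPm n, rank_eq_iff_chains ℬ hℬ hφP n]
  constructor
  · rintro ⟨hc1, hc2⟩
    refine ⟨chain_map 𝒜 ℬ φ hbij.1 hbij.2 hmul n P hc1, fun hc => hc2 ?_⟩
    have := chain_map ℬ 𝒜 ψ e.symm.injective e.symm.surjective hψmul (n+1) (φ P) hc
    rwa [hψP] at this
  · rintro ⟨hc1, hc2⟩
    constructor
    · have := chain_map ℬ 𝒜 ψ e.symm.injective e.symm.surjective hψmul n (φ P) hc1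
      rwa [hψP] at this
    · intro hc
      exact hc2 (chain_map 𝒜 ℬ φ hbij.1 hbij.2 hmul (n+1) P hc)
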